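/- Let A be a set, k ∈ ℕ, M an infinite subset of ℕ, and φ : [M]^k → A. Then there exists an infinite subset L of M such that either the restriction of φ to [L]^k is constant, or φ(s_1) ≠ φ(s_2) for every plegma pair (s_1, s_2) in [L]^k. -/

import Mathlib

/-- `s : Fin k → ℕ` is the increasing enumeration of a `k`-element subset of `M`. -/
def IsEnum (M : Set ℕ) {k : ℕ} (s : Fin k → ℕ) : Prop :=
  StrictMono s ∧ ∀ i, s i ∈ M

/-- `(p j)_{j=1,…,l}` is a plegma family in `[M]^k`. -/
def IsPlegma (M : Set ℕ) {k l : ℕ} (p : Fin l → Fin k → ℕ) : Prop :=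
  (∀ j, IsEnum M (p j)) ∧
  (∀ i : Fin k, StrictMono fun j : Fin l => p j i) ∧
  (∀ (i : Fin k) (hi : (i : ℕ) + 1 < k) (j j' : Fin l), p j i < p j' ⟨(i : ℕ) + 1, hi⟩)

/-- `(s, t)` is a plegma pair in `[M]^k`. -/
def IsPlegmaPair (M : Set ℕ) {k : ℕ} (s t : Fin k → ℕ) : Prop :=
  IsPlegma M ![s, t]

/-- `(p j)_{j=0,…,l}` is a plegma path of length `l` in `[M]^k`, i.e. each pair of
consecutive members is a plegma pair in `[M]^k`. -/
def IsPlegmaPath (M : Set ℕ) {k l : ℕ} (p : Fin (l + 1) → Fin k → ℕ) : Prop :=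
  ∀ j : Fin l, IsPlegmaPair M (p j.castSucc) (p j.succ)

/-- Infinite Ramsey theorem for `n`-subsets of ℕ with 2 colours, in sequence form. -/
theorem myRamsey : ∀ (n : ℕ) (C : (Fin n → ℕ) → Bool) (M : ℕ → ℕ), StrictMono M →
    ∃ (L : ℕ → ℕ) (b : Bool), StrictMono L ∧ Set.range L ⊆ Set.range M ∧
      ∀ s : Fin n → ℕ, StrictMono s → (∀ i, s i ∈ Set.range L) → C s = b := by
  intro n
  induction n with
  | zero =>
    intro C M hM
    exact ⟨M, C Fin.elim0, hM, subset_rfl, fun s _ _ => by rw [Subsingleton.elim s Fin.elim0]⟩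
  | succ n IH =>
    intro C M hM
    have step : ∀ (g : {f : ℕ → ℕ // StrictMono f}), ∃ (g' : {f : ℕ → ℕ // StrictMono f}) (b : Bool),
        Set.range g'.1 ⊆ Set.range (fun m => g.1 (m+1)) ∧
        ∀ s : Fin n → ℕ, StrictMono s → (∀ i, s i ∈ Set.range g'.1) →
          C (Fin.cons (g.1 0) s) = b := by
      intro g
      obtain ⟨L, b, hL, hsub, hhom⟩ := IH (fun s => C (Fin.cons (g.1 0) s))
        (fun m => g.1 (m+1)) (fun a b hab => g.2 (by omega))
      exact ⟨⟨L, hL⟩, b, hsub, hhom⟩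
    choose F B hFsub hFhom using step
    set N : ℕ → {f : ℕ → ℕ // StrictMono f} := fun i => F^[i] ⟨M, hM⟩ with hN
    have hNsucc : ∀ i, N (i+1) = F (N i) := fun i => Function.iterate_succ_apply' F i _
    have hsub1 : ∀ i, Set.range (N (i+1)).1 ⊆ Set.range (N i).1 := by
      intro i x hx
      rw [hNsucc] at hx
      obtain ⟨m, hm⟩ := hFsub (N i) hx
      exact ⟨m+1, hm⟩
    have hgt : ∀ i x, x ∈ Set.range (N (i+1)).1 → (N i).1 0 < x := by
      intro i x hx
      rw [hNsucc] at hx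
      obtain ⟨m, hm⟩ := hFsub (N i) hx
      rw [← hm]
      exact (N i).2 (by omega)
    have hchain : ∀ i j, i ≤ j → Set.range (N j).1 ⊆ Set.range (N i).1 := by
      intro i j hij
      induction j with
      | zero => rw [Nat.le_zero.mp hij]
      | succ j IHj =>
        rcases Nat.lt_or_ge i (j+1) with h | h
        · exact (IHj (by omega)).trans' (hsub1 j)
        · rw [Nat.le_antisymm hij h]
    set a : ℕ → ℕ := fun i => (N i).1 0 with ha
    have haM : ∀ i, a i ∈ Set.range M := by
      intro i
      have : a i ∈ Set.range (N i).1 := ⟨0, rfl⟩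
      exact hchain 0 i (Nat.zero_le i) this
    have hamono : StrictMono a := by
      apply strictMono_nat_of_lt_succ
      intro i
      exact hgt i _ ⟨0, rfl⟩
    have hpig : ∃ c : Bool, {i | B (N i) = c}.Infinite := by
      by_contra h
      push_neg at h
      have h1 := h true
      have h2 := h false
      have : (Set.univ : Set ℕ) ⊆ {i | B (N i) = true} ∪ {i | B (N i) = false} := by
        intro i _
        cases hB : B (N i)
        · exact Or.inr hB
        · exact Or.inl hB
      exact Set.infinite_univ ((h1.union h2).subset this)
    obtain ⟨c, hc⟩ := hpig
    set P : ℕ → Prop := fun i => B (N i) = c with hP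
    have hcP : {i | P i}.Infinite := hc
    set e : ℕ → ℕ := Nat.nth P with he
    have hemono : StrictMono e := Nat.nth_strictMono hcP
    refine ⟨fun m => a (e m), c, hamono.comp hemono, fun x ⟨m, hm⟩ => hm ▸ haM (e m), ?_⟩
    intro s hs hmem
    obtain ⟨m0, hm0⟩ := hmem 0
    have htail : ∀ j : Fin n, s j.succ ∈ Set.range (N (e m0 + 1)).1 := by
      intro j
      obtain ⟨mj, hmj⟩ := hmem j.succ
      have hlt : s 0 < s j.succ := hs (Fin.succ_pos j)
      have hm0' : a (e m0) = s 0 := hm0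
      have hmj' : a (e mj) = s j.succ := hmj
      have : m0 < mj := by
        by_contra hcon
        push_neg at hcon
        have h2 : a (e mj) ≤ a (e m0) := (hamono.comp hemono).monotone hcon
        omega
      have : e m0 + 1 ≤ e mj := hemono this
      have hmem' : s j.succ ∈ Set.range (N (e mj)).1 := ⟨0, hmj⟩
      exact hchain _ _ this hmem'
    have hts : StrictMono (Fin.tail s) := fun i j hij => hs (Fin.succ_lt_succ_iff.mpr hij)
    have := hFhom (N (e m0)) (Fin.tail s) hts (by rw [← hNsucc]; exact htail)
    have hcons : Fin.cons ((N (e m0)).1 0) (Fin.tail s) = s := by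
      rw [show (N (e m0)).1 0 = s 0 from hm0, Fin.cons_self_tail]
    rw [hcons] at this
    rw [this]
    exact Nat.nth_mem_of_infinite hcP m0

/-- A function on `Fin n` is strictly monotone as soon as consecutive values increase. -/
theorem finStrictMono {n : ℕ} {f : Fin n → ℕ}
    (h : ∀ (i : ℕ) (h2 : i + 1 < n), f ⟨i, by omega⟩ < f ⟨i+1, h2⟩) : StrictMono f := by
  have key : ∀ (d a : ℕ) (hd : a + d + 1 < n), f ⟨a, by omega⟩ < f ⟨a + d + 1, hd⟩ := by
    intro d
    induction d with
    | zero => intro a hd; exact h a hd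
    | succ d IHd =>
      intro a hd
      exact (IHd a (by omega)).trans (h (a+d+1) (by omega))
  intro a b hab
  obtain ⟨a, ha⟩ := a
  obtain ⟨b, hb⟩ := b
  have hab' : a < b := hab
  obtain ⟨d, rfl⟩ : ∃ d, b = a + d + 1 := ⟨b - a - 1, by omega⟩
  exact key d a hb

/-- Concatenation of two `k`-tuples into a `(k+k)`-tuple. -/
def cat {k : ℕ} (s w : Fin k → ℕ) : Fin (k + k) → ℕ :=
  fun r => if h : (r : ℕ) < k then s ⟨r, h⟩ else w ⟨(r : ℕ) - k, by omega⟩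

theorem cat_strictMono {k : ℕ} {s w : Fin k → ℕ} (hs : StrictMono s) (hw : StrictMono w)
    (h : ∀ i j, s i < w j) : StrictMono (cat s w) := by
  intro r r' hrr
  have hv : (r : ℕ) < (r' : ℕ) := hrr
  unfold cat
  by_cases h1 : (r : ℕ) < k <;> by_cases h2 : (r' : ℕ) < k
  · rw [dif_pos h1, dif_pos h2]; exact hs hv
  · rw [dif_pos h1, dif_neg h2]; exact h _ _
  · omega
  · rw [dif_neg h1, dif_neg h2]; exact hw (show (r:ℕ) - k < (r':ℕ) - k by omega)

theorem cat_mem {k : ℕ} {s w : Fin k → ℕ} {R : Set ℕ} (hs : ∀ i, s i ∈ R)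
    (hw : ∀ i, w i ∈ R) : ∀ r, cat s w r ∈ R := by
  intro r
  unfold cat
  split
  · exact hs _
  · exact hw _

/-- First half of a `(k+k)`-tuple. -/
def fh {k : ℕ} (u : Fin (k + k) → ℕ) : Fin k → ℕ :=
  fun i => u ⟨(i : ℕ), by have := i.isLt; omega⟩

/-- Second half of a `(k+k)`-tuple. -/
def sh {k : ℕ} (u : Fin (k + k) → ℕ) : Fin k → ℕ :=
  fun i => u ⟨k + (i : ℕ), by have := i.isLt; omega⟩

theorem fh_cat {k : ℕ} (s w : Fin k → ℕ) : fh (cat s w) = s := by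
  funext i
  show cat s w _ = s i
  unfold cat
  rw [dif_pos (show ((⟨(i:ℕ), _⟩ : Fin (k+k)) : ℕ) < k from i.isLt)]

theorem sh_cat {k : ℕ} (s w : Fin k → ℕ) : sh (cat s w) = w := by
  funext i
  show cat s w _ = w i
  unfold cat
  rw [dif_neg (show ¬ ((⟨k + (i:ℕ), _⟩ : Fin (k+k)) : ℕ) < k by simp)]
  exact congrArg w (Fin.ext (by simp))

/-- Interleaved "odd" half. -/
def ih1 {k : ℕ} (u : Fin (k + k) → ℕ) : Fin k → ℕ :=
  fun i => u ⟨2 * (i : ℕ), by have := i.isLt; omega⟩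

/-- Interleaved "even" half. -/
def ih2 {k : ℕ} (u : Fin (k + k) → ℕ) : Fin k → ℕ :=
  fun i => u ⟨2 * (i : ℕ) + 1, by have := i.isLt; omega⟩

/-- For every map `φ` from `[M]^k` to a set `A` there is an infinite
`L ⊆ M` such that either `φ` is constant on `[L]^k` or `φ` takes different values on the
two members of every plegma pair in `[L]^k`. -/
theorem statement5 {A : Type*} (k : ℕ) (M : ℕ → ℕ) (hM : StrictMono M)
    (φ : (Fin k → ℕ) → A) :
    ∃ L : ℕ → ℕ, StrictMono L ∧ Set.range L ⊆ Set.range M ∧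
      ((∀ s t : Fin k → ℕ, IsEnum (Set.range L) s → IsEnum (Set.range L) t → φ s = φ t) ∨
        (∀ s t : Fin k → ℕ, IsPlegmaPair (Set.range L) s t → φ s ≠ φ t)) := by
  classical
  rcases Nat.eq_zero_or_pos k with hk | hk
  · subst hk
    refine ⟨M, hM, subset_rfl, Or.inl ?_⟩
    intro s t _ _
    rw [Subsingleton.elim s t]
  -- the two colourings
  obtain ⟨L1, b1, hL1, hL1M, hhom1⟩ :=
    myRamsey (k+k) (fun u => decide (φ (fh u) = φ (sh u))) M hM
  obtain ⟨L2, b2, hL2, hL2L1, hhom2⟩ :=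
    myRamsey (k+k) (fun u => decide (φ (ih1 u) = φ (ih2 u))) L1 hL1
  have hL2M : Set.range L2 ⊆ Set.range M := hL2L1.trans hL1M
  have hhom1' : ∀ u : Fin (k+k) → ℕ, StrictMono u → (∀ r, u r ∈ Set.range L2) →
      decide (φ (fh u) = φ (sh u)) = b1 :=
    fun u hu hmem => hhom1 u hu (fun r => hL2L1 (hmem r))
  refine ⟨L2, hL2, hL2M, ?_⟩
  by_cases hb1 : b1 = true
  · -- first/second half colouring constantly "equal" : φ is constant on [L2]^k
    left
    have key : ∀ s : Fin k → ℕ, IsEnum (Set.range L2) s →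
        ∀ Bd : ℕ, (∀ i, s i < Bd) → φ s = φ (fun j : Fin k => L2 (Bd + (j : ℕ))) := by
      intro s hsE Bd hBd
      set w : Fin k → ℕ := fun j : Fin k => L2 (Bd + (j : ℕ)) with hw
      have hwmono : StrictMono w := fun i j hij => hL2 (by
        have : (i : ℕ) < (j : ℕ) := hij
        omega)
      have hcross : ∀ i j, s i < w j := by
        intro i j
        have h1 : Bd + (j : ℕ) ≤ L2 (Bd + (j : ℕ)) := hL2.le_apply
        have := hBd i
        show s i < L2 (Bd + (j : ℕ))
        omega
      have humono := cat_strictMono hsE.1 hwmono hcross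
      have humem := cat_mem hsE.2 (fun j => ⟨Bd + (j : ℕ), rfl⟩)
      have h1 := hhom1' (cat s w) humono humem
      rw [hb1, fh_cat, sh_cat] at h1
      exact of_decide_eq_true h1
    intro s t hsE htE
    set Bd : ℕ := (∑ i, s i) + (∑ i, t i) + 1 with hBd
    have hsb : ∀ i, s i < Bd := by
      intro i
      have h1 : s i ≤ ∑ j, s j := Finset.single_le_sum (fun j _ => Nat.zero_le (s j))
        (Finset.mem_univ i)
      omega
    have htb : ∀ i, t i < Bd := by
      intro i
      have h1 : t i ≤ ∑ j, t j := Finset.single_le_sum (fun j _ => Nat.zero_le (t j))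
        (Finset.mem_univ i)
      omega
    rw [key s hsE Bd hsb, key t htE Bd htb]
  · replace hb1 : b1 = false := by simpa using hb1
    by_cases hb2 : b2 = true
    · -- impossible : build a plegma path escaping to the right
      exfalso
      set q : ℕ → Fin k → ℕ := fun j i => L2 ((k+1) * (i : ℕ) + j) with hq
      have hqmono : ∀ j, StrictMono (q j) := by
        intro j i i' hii
        apply hL2
        have h1 : (i : ℕ) < (i' : ℕ) := hii
        have h2 : (k+1) * (i : ℕ) < (k+1) * (i' : ℕ) :=
          mul_lt_mul_of_pos_left h1 (by omega)
        omega
      have hqmem : ∀ j i, q j i ∈ Set.range L2 := fun j i => ⟨_, rfl⟩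
      have hchainφ : ∀ j, φ (q 0) = φ (q j) := by
        intro j
        induction j with
        | zero => rfl
        | succ j IHj =>
          set u : Fin (k+k) → ℕ := fun r => L2 ((k+1) * ((r : ℕ)/2) + j + (r : ℕ) % 2) with hu
          have humono : StrictMono u := by
            apply finStrictMono
            intro i h2
            apply hL2
            show (k+1) * (i/2) + j + i % 2 < (k+1) * ((i+1)/2) + j + (i+1) % 2
            by_cases hpar : i % 2 = 0
            · have hd : (i+1)/2 = i/2 := by omega
              have hm1 : i % 2 = 0 := hpar
              have hm2 : (i+1) % 2 = 1 := by omega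
              rw [hd, hm1, hm2]
              omega
            · have hd : (i+1)/2 = i/2 + 1 := by omega
              have hm1 : i % 2 = 1 := by omega
              have hm2 : (i+1) % 2 = 0 := by omega
              rw [hd, hm1, hm2, Nat.mul_succ]
              omega
          have h2 := hhom2 u humono (fun r => ⟨_, rfl⟩)
          rw [hb2] at h2
          have heq := of_decide_eq_true h2
          have e1 : ih1 u = q j := by
            funext i
            show L2 _ = L2 _
            congr 1
            have d1 : (2 * (i:ℕ)) / 2 = (i:ℕ) := by omega
            have d2 : (2 * (i:ℕ)) % 2 = 0 := by omega
            rw [d1, d2]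
            omega
          have e2 : ih2 u = q (j+1) := by
            funext i
            show L2 _ = L2 _
            congr 1
            have d1 : (2 * (i:ℕ) + 1) / 2 = (i:ℕ) := by omega
            have d2 : (2 * (i:ℕ) + 1) % 2 = 1 := by omega
            rw [d1, d2]
            omega
          rw [e1, e2] at heq
          exact IHj.trans heq
      set m : ℕ := (k+1) * (k-1) + 1 with hm
      have hcross : ∀ i i', q 0 i < q m i' := by
        intro i i'
        apply hL2
        have h1 : (k+1) * (i : ℕ) ≤ (k+1) * (k-1) :=
          Nat.mul_le_mul_left _ (by have := i.isLt; omega)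
        have h2 : 0 ≤ (k+1) * (i' : ℕ) := Nat.zero_le _
        omega
      have humono := cat_strictMono (hqmono 0) (hqmono m) hcross
      have humem := cat_mem (hqmem 0) (hqmem m)
      have h1 := hhom1' (cat (q 0) (q m)) humono humem
      rw [hb1, fh_cat, sh_cat] at h1
      exact (of_decide_eq_false h1) (hchainφ m)
    · -- plegma pairs always get different values
      replace hb2 : b2 = false := by simpa using hb2
      right
      intro s t hpp
      obtain ⟨henum, hmono, hcross⟩ := hpp
      have hsE : IsEnum (Set.range L2) s := henum 0
      have htE : IsEnum (Set.range L2) t := henum 1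
      have hst : ∀ i, s i < t i := fun i => hmono i (show (0 : Fin 2) < 1 by decide)
      have hts : ∀ (i : ℕ) (hik : i < k) (hi : i + 1 < k), t ⟨i, hik⟩ < s ⟨i+1, hi⟩ :=
        fun i hik hi => hcross ⟨i, hik⟩ hi 1 0
      set u : Fin (k+k) → ℕ := fun r =>
        if h : (r : ℕ) % 2 = 0 then s ⟨(r : ℕ)/2, by have := r.isLt; omega⟩
        else t ⟨(r : ℕ)/2, by have := r.isLt; omega⟩ with hu
      have humono : StrictMono u := by
        apply finStrictMono
        intro i h2
        show dite _ _ _ < dite _ _ _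
        by_cases hpar : i % 2 = 0
        · rw [dif_pos hpar, dif_neg (show ¬ (i+1) % 2 = 0 by omega)]
          have : t ⟨(i+1)/2, by omega⟩ = t ⟨i/2, by omega⟩ :=
            congrArg t (Fin.ext (by show (i+1)/2 = i/2; omega))
          rw [this]
          exact hst _
        · rw [dif_neg hpar, dif_pos (show (i+1) % 2 = 0 by omega)]
          have : s ⟨(i+1)/2, by omega⟩ = s ⟨i/2 + 1, by omega⟩ :=
            congrArg s (Fin.ext (by show (i+1)/2 = i/2 + 1; omega))
          rw [this]
          exact hts (i/2) (by omega) (by omega)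
      have humem : ∀ r, u r ∈ Set.range L2 := by
        intro r
        show dite _ _ _ ∈ _
        split
        · exact hsE.2 _
        · exact htE.2 _
      have h2 := hhom2 u humono humem
      rw [hb2] at h2
      have hne := of_decide_eq_false h2
      have e1 : ih1 u = s := by
        funext i
        show dite _ _ _ = s i
        rw [dif_pos (show (2 * (i:ℕ)) % 2 = 0 by omega)]
        exact congrArg s (Fin.ext (by show (2 * (i:ℕ))/2 = (i:ℕ); omega))
      have e2 : ih2 u = t := by
        funext i
        show dite _ _ _ = t i
        rw [dif_neg (show ¬ (2 * (i:ℕ) + 1) % 2 = 0 by omega)]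
        exact congrArg t (Fin.ext (by show (2 * (i:ℕ) + 1)/2 = (i:ℕ); omega))
      rw [e1, e2] at hne
      exact hne
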